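/- Let D have CDF F and fair-cap value τ for cost c > 0 (so E[(v − τ)_+] = c). Let v_1, …, v_n be i.i.d. from D with v_n independent of v_{1:n−1}, let M = max{v_1, …, v_{n−1}}, Δ = (v_n − M)_+ − c, and B the event that M ∈ [τ, τ + σ] for some fixed σ > 0. Then E[Δ·1_B] ≥ −σ(1 − F(τ))·P[B]. -/

import Mathlib

open MeasureTheory

theorem faircap_boundary_loss_bound
    (μ : Measure ℝ) [IsProbabilityMeasure μ] (c τ σ : ℝ) (hc : 0 < c) (hσ : 0 < σ)
    (hInt : Integrable (fun v => max (v - τ) 0) μ)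
    (hfair : ∫ v, max (v - τ) 0 ∂μ = c)
    (m : ℕ) (hm : 1 ≤ m) :
    -σ * (1 - (μ (Set.Iic τ)).toReal) *
        ((Measure.pi fun _ : Fin (m + 1) => μ)
          {ω | (⨆ i : Fin m, ω i.castSucc) ∈ Set.Icc τ (τ + σ)}).toReal
      ≤ ∫ ω in {ω : Fin (m + 1) → ℝ |
            (⨆ i : Fin m, ω i.castSucc) ∈ Set.Icc τ (τ + σ)},
          (max (ω (Fin.last m) - ⨆ i : Fin m, ω i.castSucc) 0 - c)
          ∂(Measure.pi fun _ : Fin (m + 1) => μ) := by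
  haveI : Nonempty (Fin m) := Fin.pos_iff_nonempty.mp (by omega)
  set ν : Measure (Fin m → ℝ) := Measure.pi fun _ => μ with hν
  set P : Measure (Fin (m + 1) → ℝ) := Measure.pi fun _ => μ with hP
  set M : (Fin m → ℝ) → ℝ := fun y => ⨆ i, y i with hMdef
  have hMmeas : Measurable M := by
    have h0 := Finset.measurable_sup' (α := ℝ) (δ := Fin m → ℝ)
        (s := (Finset.univ : Finset (Fin m)))
        (f := fun (i : Fin m) (y : Fin m → ℝ) => y i)
        Finset.univ_nonempty (fun i _ => measurable_pi_apply i)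
    convert h0 using 1
    funext y
    show (⨆ i, y i) = _
    rw [Finset.sup'_apply, ← Finset.sup'_univ_eq_ciSup]
  set B : Set (Fin m → ℝ) := {y | M y ∈ Set.Icc τ (τ + σ)} with hBdef
  have hBmeas : MeasurableSet B := hMmeas measurableSet_Icc
  set e := MeasurableEquiv.piFinSuccAbove (fun _ : Fin (m + 1) => ℝ) (Fin.last m) with he
  have hmp : MeasurePreserving e P (μ.prod ν) :=
    measurePreserving_piFinSuccAbove (fun _ : Fin (m + 1) => μ) (Fin.last m)
  have heval : ∀ ω : Fin (m + 1) → ℝ,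
      e ω = (ω (Fin.last m), fun j : Fin m => ω j.castSucc) := by
    intro ω
    refine Prod.ext rfl (funext fun j => ?_)
    show ω ((Fin.last m).succAbove j) = _
    rw [Fin.succAbove_last]
  -- the event in the original space is the preimage of univ ×ˢ B
  have hset : {ω : Fin (m + 1) → ℝ | (⨆ i : Fin m, ω i.castSucc) ∈ Set.Icc τ (τ + σ)}
      = e ⁻¹' (Set.univ ×ˢ B) := by
    ext ω
    simp [heval ω, hBdef, hMdef]
  -- the integrand as a function on the product space
  set G : ℝ × (Fin m → ℝ) → ℝ := fun p => max (p.1 - M p.2) 0 - c with hGdef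
  have hGmeas : Measurable G :=
    ((measurable_fst.sub (hMmeas.comp measurable_snd)).max measurable_const).sub
      measurable_const
  -- lower bound function on the product space
  set h : ℝ → ℝ := fun x =>
    (max (x - τ) 0 - c) - σ * Set.indicator (Set.Ioi τ) (fun _ => (1 : ℝ)) x with hhdef
  have hhInt : Integrable h μ := by
    refine Integrable.sub (hInt.sub (integrable_const c)) ?_
    exact ((integrable_const (1 : ℝ)).indicator measurableSet_Ioi).const_mul σ
  have hone : Integrable (fun _ : Fin m → ℝ => (1 : ℝ)) ν := integrable_const 1
  have hHInt : Integrable (fun p : ℝ × (Fin m → ℝ) => h p.1 * 1) (μ.prod ν) :=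
    hhInt.mul_prod hone
  -- integrability of G on univ ×ˢ B
  have hGint : IntegrableOn G (Set.univ ×ˢ B) (μ.prod ν) := by
    have hbound : Integrable (fun p : ℝ × (Fin m → ℝ) => (max (p.1 - τ) 0 + c) * 1)
        (μ.prod ν) := (hInt.add (integrable_const c)).mul_prod hone
    refine Integrable.mono' (hbound.integrableOn) hGmeas.aestronglyMeasurable ?_
    refine (ae_restrict_iff' ((MeasurableSet.univ).prod hBmeas)).2 ?_
    refine Filter.Eventually.of_forall fun p hp => ?_
    have hMτ : τ ≤ M p.2 := (hp.2 : M p.2 ∈ Set.Icc τ (τ + σ)).1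
    have h1 : (0 : ℝ) ≤ max (p.1 - M p.2) 0 := le_max_right _ _
    have h2 : max (p.1 - M p.2) 0 ≤ max (p.1 - τ) 0 :=
      max_le_max (by linarith) le_rfl
    have h3 := le_max_right (p.1 - τ) 0
    have habs : |G p| ≤ max (p.1 - τ) 0 + c := by
      show |max (p.1 - M p.2) 0 - c| ≤ _
      rw [abs_sub_le_iff]
      constructor
      · linarith
      · linarith
    simpa [Real.norm_eq_abs] using habs
  -- pointwise inequality on univ ×ˢ B
  have hpt : ∀ p ∈ Set.univ ×ˢ B, h p.1 * 1 ≤ G p := by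
    rintro ⟨x, y⟩ hp
    have hMτ : τ ≤ M y := (hp.2 : M y ∈ Set.Icc τ (τ + σ)).1
    have hMστ : M y ≤ τ + σ := (hp.2 : M y ∈ Set.Icc τ (τ + σ)).2
    simp only [hGdef, hhdef, mul_one]
    by_cases hx : x ≤ τ
    · have h0 : max (x - τ) 0 = 0 := max_eq_right (by linarith)
      have h0' : Set.indicator (Set.Ioi τ) (fun _ => (1 : ℝ)) x = 0 :=
        Set.indicator_of_notMem (by simpa using hx) _
      have : (0 : ℝ) ≤ max (x - M y) 0 := le_max_right _ _
      rw [h0, h0']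
      linarith
    · push_neg at hx
      have h0' : Set.indicator (Set.Ioi τ) (fun _ => (1 : ℝ)) x = 1 :=
        Set.indicator_of_mem (by simpa using hx) _
      have h1 : max (x - τ) 0 = x - τ := max_eq_left (by linarith)
      have h2 : x - M y ≤ max (x - M y) 0 := le_max_left _ _
      rw [h1, h0']
      linarith
  -- main comparison on the product space
  have hmain : ∫ p in Set.univ ×ˢ B, h p.1 * 1 ∂(μ.prod ν)
      ≤ ∫ p in Set.univ ×ˢ B, G p ∂(μ.prod ν) :=
    setIntegral_mono_on hHInt.integrableOn hGint ((MeasurableSet.univ).prod hBmeas) hpt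
  -- compute the left integral
  have hcompute : ∫ p in Set.univ ×ˢ B, h p.1 * 1 ∂(μ.prod ν)
      = (-σ * (1 - (μ (Set.Iic τ)).toReal)) * (ν B).toReal := by
    have := setIntegral_prod_mul (μ := μ) (ν := ν) h (fun _ => (1 : ℝ)) Set.univ B
    rw [this]
    have h1 : ∫ y in B, (1 : ℝ) ∂ν = (ν B).toReal := by
      simp
      rfl
    have h2 : ∫ x in Set.univ, h x ∂μ = ∫ x, h x ∂μ := by
      simp
    have h3 : ∫ x, h x ∂μ = -σ * (1 - (μ (Set.Iic τ)).toReal) := by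
      have eInd : Integrable
          (fun x => σ * Set.indicator (Set.Ioi τ) (fun _ => (1 : ℝ)) x) μ :=
        ((integrable_const (1 : ℝ)).indicator measurableSet_Ioi).const_mul σ
      have e1 : ∫ x, h x ∂μ = (∫ x, (max (x - τ) 0 - c) ∂μ)
          - ∫ x, σ * Set.indicator (Set.Ioi τ) (fun _ => (1 : ℝ)) x ∂μ :=
        integral_sub (hInt.sub (integrable_const c)) eInd
      have e2 : ∫ x, (max (x - τ) 0 - c) ∂μ = c - c := by
        rw [integral_sub hInt (integrable_const c), hfair]
        simp
      have hi : ∫ x, σ * Set.indicator (Set.Ioi τ) (fun _ => (1 : ℝ)) x ∂μ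
          = σ * (μ (Set.Ioi τ)).toReal := by
        rw [integral_const_mul, integral_indicator_const _ measurableSet_Ioi]
        simp
        exact Or.inl rfl
      have hio : (μ (Set.Ioi τ)).toReal = 1 - (μ (Set.Iic τ)).toReal := by
        rw [← Set.compl_Iic, prob_compl_eq_one_sub measurableSet_Iic,
          ENNReal.toReal_sub_of_le prob_le_one ENNReal.one_ne_top, ENNReal.toReal_one]
      rw [e1, e2, hi, hio]
      ring
    rw [h1, h2, h3]
  -- the probability of the event
  have hPB : P {ω : Fin (m + 1) → ℝ | (⨆ i : Fin m, ω i.castSucc) ∈ Set.Icc τ (τ + σ)}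
      = ν B := by
    rw [hset, hmp.measure_preimage ((MeasurableSet.univ.prod hBmeas)).nullMeasurableSet,
      Measure.prod_prod, measure_univ, one_mul]
  -- transfer the right integral
  have htrans : ∫ ω in {ω : Fin (m + 1) → ℝ |
        (⨆ i : Fin m, ω i.castSucc) ∈ Set.Icc τ (τ + σ)},
        (max (ω (Fin.last m) - ⨆ i : Fin m, ω i.castSucc) 0 - c) ∂P
      = ∫ p in Set.univ ×ˢ B, G p ∂(μ.prod ν) := by
    rw [hset, ← hmp.setIntegral_preimage_emb e.measurableEmbedding G]
    refine setIntegral_congr_fun (e.measurable (MeasurableSet.univ.prod hBmeas)) ?_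
    intro ω _
    simp [hGdef, heval ω, hMdef]
  calc -σ * (1 - (μ (Set.Iic τ)).toReal) *
        (P {ω : Fin (m + 1) → ℝ | (⨆ i : Fin m, ω i.castSucc) ∈ Set.Icc τ (τ + σ)}).toReal
      = ∫ p in Set.univ ×ˢ B, h p.1 * 1 ∂(μ.prod ν) := by rw [hPB, hcompute]
    _ ≤ ∫ p in Set.univ ×ˢ B, G p ∂(μ.prod ν) := hmain
    _ = _ := htrans.symm
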